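/- Let X and Y be normed spaces, ε > 0, and let A ⊆ S_X be symmetrically (1+ε)-separated, i.e., ‖x + y‖ ≥ 1 + ε and ‖x − y‖ ≥ 1 + ε for all distinct x, y ∈ A. Let T : X → Y be linear with ‖x‖ ≤ ‖Tx‖ ≤ (1 + δ)‖x‖ for all x, where 0 < δ ≤ ε/(2 + ε). Then {Tx/‖Tx‖ : x ∈ A} is symmetrically (1 + ε/2)-separated in the unit sphere of Y. -/

import Mathlib

lemma stmt_4_core {X Y : Type*} [NormedAddCommGroup X] [NormedSpace ℝ X]
    [NormedAddCommGroup Y] [NormedSpace ℝ Y]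
    (ε δ : ℝ) (hε : 0 < ε) (hδ : 0 < δ) (hδε : δ ≤ ε / (2 + ε))
    (T : X →ₗ[ℝ] Y)
    (hT : ∀ x : X, ‖x‖ ≤ ‖T x‖ ∧ ‖T x‖ ≤ (1 + δ) * ‖x‖)
    (x y : X) (hx : ‖x‖ = 1) (hy : ‖y‖ = 1)
    (hxy : 1 + ε ≤ ‖x - y‖) (hab : ‖T x‖ ≤ ‖T y‖) :
    1 + ε / 2 ≤ ‖‖T x‖⁻¹ • T x - ‖T y‖⁻¹ • T y‖ := by
  set a := ‖T x‖ with ha_def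
  set b := ‖T y‖ with hb_def
  have ha1 : 1 ≤ a := by have := (hT x).1; rw [hx] at this; exact this
  have hb1 : 1 ≤ b := by have := (hT y).1; rw [hy] at this; exact this
  have haδ : a ≤ 1 + δ := by have := (hT x).2; rw [hx, mul_one] at this; exact this
  have hbδ : b ≤ 1 + δ := by have := (hT y).2; rw [hy, mul_one] at this; exact this
  have ha0 : (0:ℝ) < a := lt_of_lt_of_le one_pos ha1
  have hb0 : (0:ℝ) < b := lt_of_lt_of_le one_pos hb1
  have key : a⁻¹ • T x - b⁻¹ • T y = a⁻¹ • T (x - (a / b) • y) := by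
    rw [map_sub, map_smul, smul_sub, smul_smul]
    congr 2
    field_simp
  rw [key, norm_smul, norm_inv, Real.norm_eq_abs, abs_of_pos ha0]
  have h1 : ‖x - (a / b) • y‖ ≤ ‖T (x - (a / b) • y)‖ := (hT _).1
  have h2 : ‖x - y‖ - ‖y - (a / b) • y‖ ≤ ‖x - (a / b) • y‖ := by
    have h3 := norm_sub_le_norm_sub_add_norm_sub x ((a/b) • y) y
    have h3' : ‖(a/b) • y - y‖ = ‖y - (a/b) • y‖ := norm_sub_rev _ _
    linarith
  have h4 : ‖y - (a / b) • y‖ = 1 - a / b := by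
    have hab' : a / b ≤ 1 := (div_le_one hb0).mpr hab
    have : y - (a / b) • y = (1 - a / b) • y := by
      rw [sub_smul, one_smul]
    rw [this, norm_smul, Real.norm_eq_abs, abs_of_nonneg (by linarith), hy, mul_one]
  have h5 : ε + a / b ≤ ‖x - (a / b) • y‖ := by
    rw [h4] at h2; linarith
  have h6 : ε + a / b ≤ ‖T (x - (a / b) • y)‖ := le_trans h5 h1
  have h7 : a⁻¹ * (ε + a / b) ≤ a⁻¹ * ‖T (x - (a / b) • y)‖ :=
    mul_le_mul_of_nonneg_left h6 (by positivity)
  refine le_trans ?_ h7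
  -- a⁻¹ * (ε + a/b) = ε/a + 1/b ≥ (1+ε)/(1+δ) ≥ 1 + ε/2
  have hkey : a⁻¹ * (ε + a / b) = ε / a + 1 / b := by
    field_simp
  rw [hkey]
  have hδε' : δ * (2 + ε) ≤ ε := (le_div_iff₀ (by linarith)).mp hδε
  have e1 : ε / (1 + δ) ≤ ε / a := by gcongr
  have e2 : 1 / (1 + δ) ≤ 1 / b := by gcongr
  have e3 : 1 + ε / 2 ≤ (1 + ε) / (1 + δ) := by
    rw [le_div_iff₀ (by linarith)]; nlinarith
  calc 1 + ε / 2 ≤ (1 + ε) / (1 + δ) := e3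
    _ = ε / (1 + δ) + 1 / (1 + δ) := by rw [← add_div, add_comm]
    _ ≤ ε / a + 1 / b := add_le_add e1 e2

theorem stmt_4 {X Y : Type*} [NormedAddCommGroup X] [NormedSpace ℝ X]
    [NormedAddCommGroup Y] [NormedSpace ℝ Y]
    (ε δ : ℝ) (hε : 0 < ε) (hδ : 0 < δ) (hδε : δ ≤ ε / (2 + ε))
    (A : Set X) (hA : ∀ x ∈ A, ‖x‖ = 1)
    (hsep : ∀ x ∈ A, ∀ y ∈ A, x ≠ y →
      1 + ε ≤ ‖x - y‖ ∧ 1 + ε ≤ ‖x + y‖)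
    (T : X →ₗ[ℝ] Y)
    (hT : ∀ x : X, ‖x‖ ≤ ‖T x‖ ∧ ‖T x‖ ≤ (1 + δ) * ‖x‖) :
    ∀ x ∈ A, ∀ y ∈ A, x ≠ y →
      1 + ε / 2 ≤ ‖‖T x‖⁻¹ • T x - ‖T y‖⁻¹ • T y‖ ∧
      1 + ε / 2 ≤ ‖‖T x‖⁻¹ • T x + ‖T y‖⁻¹ • T y‖ := by
  intro x hxA y hyA hxy
  have hx := hA x hxA
  have hy := hA y hyA
  obtain ⟨hsub, hadd⟩ := hsep x hxA y hyA hxy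
  constructor
  · rcases le_total ‖T x‖ ‖T y‖ with h | h
    · exact stmt_4_core ε δ hε hδ hδε T hT x y hx hy hsub h
    · rw [norm_sub_rev]
      exact stmt_4_core ε δ hε hδ hδε T hT y x hy hx (by rwa [norm_sub_rev]) h
  · rcases le_total ‖T x‖ ‖T y‖ with h | h
    · have := stmt_4_core ε δ hε hδ hδε T hT x (-y) hx (by rw [norm_neg, hy])
        (by rwa [sub_neg_eq_add]) (by rwa [map_neg, norm_neg])
      rwa [map_neg, norm_neg, smul_neg, sub_neg_eq_add] at this
    · have := stmt_4_core ε δ hε hδ hδε T hT y (-x) hy (by rw [norm_neg, hx])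
        (by rw [sub_neg_eq_add, add_comm y x]; exact hadd) (by rwa [map_neg, norm_neg])
      rw [map_neg, norm_neg, smul_neg, sub_neg_eq_add,
        add_comm (‖T y‖⁻¹ • T y) (‖T x‖⁻¹ • T x)] at this
      exact this
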